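/- For 1/4 ≤ θ < 1/2, g(θ) ≥ 1 - 2θ: for any ε > 0 and any constants c, c' > 0, there exist arbitrarily large y such that the interval [y - c·y^{1-2θ-ε}, y + c·y^{1-2θ-ε}] contains no integer n with n = a₁b₁ = a₂b₂ where a₁ < a₂ ≤ b₂ < b₁ are integers in [y^{1/2} - c'y^θ, y^{1/2} + c'y^θ]. -/

import Mathlib

open Finset Real Filter

set_option maxHeartbeats 1000000

private lemma cardIcc_le {a b : ℕ} {x : ℝ} (h1 : (b:ℝ) - a + 1 ≤ x) (h2 : 0 ≤ x) :
    (((Finset.Icc a b).card : ℕ) : ℝ) ≤ x := by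
  rcases le_or_gt a b with h | h
  · rw [Nat.card_Icc, Nat.cast_sub (by omega)]
    push_cast
    linarith
  · rw [Finset.Icc_eq_empty (by omega)]
    simpa using h2

private lemma four_number {a₁ a₂ b₁ b₂ : ℕ} (ha : 0 < a₁) (h12 : a₁ < a₂)
    (hb : 0 < b₂) (hmul : a₁ * b₁ = a₂ * b₂) :
    ∃ s t u v : ℕ, 0 < s ∧ 0 < t ∧ 0 < v ∧ t < u ∧
      a₁ = s * t ∧ a₂ = s * u ∧ b₁ = u * v ∧ b₂ = t * v := by
  set g := Nat.gcd a₁ a₂ with hg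
  have hg0 : 0 < g := Nat.gcd_pos_of_pos_left _ ha
  set t := a₁ / g with ht
  set u := a₂ / g with hu
  have ha1 : a₁ = g * t := (Nat.mul_div_cancel' (Nat.gcd_dvd_left _ _)).symm
  have ha2 : a₂ = g * u := (Nat.mul_div_cancel' (Nat.gcd_dvd_right _ _)).symm
  have hcop : Nat.Coprime t u := Nat.coprime_div_gcd_div_gcd hg0
  have ht0 : 0 < t := by
    rcases Nat.eq_zero_or_pos t with h | h
    · exfalso; rw [h, Nat.mul_zero] at ha1; omega
    · exact h
  have hu0 : 0 < u := by
    rcases Nat.eq_zero_or_pos u with h | h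
    · exfalso; rw [h, Nat.mul_zero] at ha2; omega
    · exact h
  have htu : t < u := by
    have : g * t < g * u := by rw [← ha1, ← ha2]; exact h12
    exact Nat.lt_of_mul_lt_mul_left this
  have hkey : t * b₁ = u * b₂ := by
    have : g * (t * b₁) = g * (u * b₂) := by
      rw [← Nat.mul_assoc, ← Nat.mul_assoc, ← ha1, ← ha2, hmul]
    exact Nat.eq_of_mul_eq_mul_left hg0 this
  have hdvd : u ∣ b₁ := by
    have : u ∣ t * b₁ := ⟨b₂, hkey⟩
    exact (Nat.Coprime.dvd_of_dvd_mul_left hcop.symm this)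
  obtain ⟨v, hv⟩ := hdvd
  have hb2 : b₂ = t * v := by
    have : u * (t * v) = u * b₂ := by rw [← hkey, hv]; ring
    exact (Nat.eq_of_mul_eq_mul_left hu0 this).symm
  have hv0 : 0 < v := by
    rcases Nat.eq_zero_or_pos v with h | h
    · exfalso; rw [h, Nat.mul_zero] at hb2; omega
    · exact h
  exact ⟨g, t, u, v, hg0, ht0, hv0, htu, ha1, ha2, hv, hb2⟩

/-- The predicate: `y` admits a bad double-factorization configuration. -/
private def Bad (θ ε c c' y : ℝ) : Prop :=
  ∃ n a₁ a₂ b₁ b₂ : ℕ, 0 < a₁ ∧ a₁ < a₂ ∧ a₂ ≤ b₂ ∧ b₂ < b₁ ∧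
    n = a₁ * b₁ ∧ n = a₂ * b₂ ∧
    y - c * y ^ (1 - 2*θ - ε) ≤ (n : ℝ) ∧ (n : ℝ) ≤ y + c * y ^ (1 - 2*θ - ε) ∧
    y ^ ((1:ℝ)/2) - c' * y ^ θ ≤ (a₁ : ℝ) ∧ (a₁ : ℝ) ≤ y ^ ((1:ℝ)/2) + c' * y ^ θ ∧
    y ^ ((1:ℝ)/2) - c' * y ^ θ ≤ (a₂ : ℝ) ∧ (a₂ : ℝ) ≤ y ^ ((1:ℝ)/2) + c' * y ^ θ ∧
    y ^ ((1:ℝ)/2) - c' * y ^ θ ≤ (b₂ : ℝ) ∧ (b₂ : ℝ) ≤ y ^ ((1:ℝ)/2) + c' * y ^ θ ∧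
    y ^ ((1:ℝ)/2) - c' * y ^ θ ≤ (b₁ : ℝ) ∧ (b₁ : ℝ) ≤ y ^ ((1:ℝ)/2) + c' * y ^ θ

private def recon : ((_ : ℕ) × (ℕ × ℕ × ℕ)) → ℕ :=
  fun q => q.2.1 * q.1 * (q.1 + q.2.2.2) * (q.2.1 + q.2.2.1)

private lemma main (θ ε c c' : ℝ) (hθ1 : 1/4 ≤ θ) (hθ2 : θ < 1/2) (hε : 0 < ε)
    (hε2 : ε ≤ 1/2 - θ) (hc : 0 < c) (hc' : 0 < c') :
    ∀ y₀ : ℝ, ∃ y : ℝ, y₀ ≤ y ∧ 1 ≤ y ∧ ¬ Bad θ ε c c' y := by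
  intro y₀
  by_contra hcon
  push_neg at hcon
  -- `hcon : ∀ y, y₀ ≤ y → 1 ≤ y → Bad θ ε c c' y`
  set e : ℝ := 1 - 2*θ - ε with he_def
  have he0 : 0 < e := by simp only [he_def]; linarith
  have he1 : e ≤ 1 := by simp only [he_def]; linarith
  have hθ0 : 0 < θ := by linarith
  -- constants for the final contradiction
  set K : ℝ := 1152*c*c'^2*(1 + max 0 (Real.log (4*c'))) with hK_def
  have hK1 : 0 < K := by
    have : (0:ℝ) ≤ max 0 (Real.log (4*c')) := le_max_left _ _
    have : (1:ℝ) ≤ 1 + max 0 (Real.log (4*c')) := by linarith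
    positivity
  -- choose Y large enough
  obtain ⟨Y, h0, h1, h2, h3, h4⟩ :
      ∃ Y : ℝ, max y₀ 1 ≤ Y ∧ 4*c' ≤ Y ^ ((1:ℝ)/2 - θ) ∧ 12*c ≤ Y ^ (2*θ + ε) ∧
        1/(2*c') ≤ Y ^ θ ∧ K*(1 + 2/ε) + 1 ≤ Y ^ (ε/2) := by
    have e0 := eventually_ge_atTop (max y₀ 1)
    have e1 := (tendsto_rpow_atTop (show (0:ℝ) < 1/2 - θ by linarith)).eventually_ge_atTop (4*c')
    have e2 := (tendsto_rpow_atTop (show (0:ℝ) < 2*θ + ε by linarith)).eventually_ge_atTop (12*c)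
    have e3 := (tendsto_rpow_atTop hθ0).eventually_ge_atTop (1/(2*c'))
    have e4 := (tendsto_rpow_atTop (show (0:ℝ) < ε/2 by linarith)).eventually_ge_atTop (K*(1 + 2/ε) + 1)
    exact ((((e0.and e1).and e2).and e3).and e4).exists.imp (by tauto)
  have hY1 : (1:ℝ) ≤ Y := le_trans (le_max_right _ _) h0
  have hY0 : (0:ℝ) < Y := by linarith
  have hy₀Y : y₀ ≤ Y := le_trans (le_max_left _ _) h0
  set sY : ℝ := Y ^ ((1:ℝ)/2) with hsY_def
  have hsY0 : 0 < sY := Real.rpow_pos_of_pos hY0 _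
  set E : ℝ := 2*c'*Y^θ with hE_def
  have hE0 : 0 < E := by positivity
  have hE1 : 1 ≤ E := by
    have := mul_le_mul_of_nonneg_left h3 (le_of_lt (show (0:ℝ) < 2*c' by linarith))
    rw [mul_one_div, mul_div_assoc] at this
    calc (1:ℝ) = 2*c'*(1/(2*c')) := by field_simp
    _ ≤ 2*c'*(Y^θ) := by
        apply mul_le_mul_of_nonneg_left h3 (by positivity)
  have h2E : 2*E ≤ sY := by
    have : (4*c') * Y^θ ≤ Y ^ ((1:ℝ)/2 - θ) * Y^θ :=
      mul_le_mul_of_nonneg_right h1 (le_of_lt (Real.rpow_pos_of_pos hY0 _))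
    calc 2*E = (4*c') * Y^θ := by rw [hE_def]; ring
    _ ≤ Y ^ ((1:ℝ)/2 - θ) * Y^θ := this
    _ = sY := by rw [← Real.rpow_add hY0, hsY_def]; norm_num
  set H : ℝ := 2*c*Y^e with hH_def
  have hH0 : 0 < H := by positivity
  -- general power bound on [Y, 2Y]
  have hpow : ∀ y : ℝ, Y ≤ y → y ≤ 2*Y → ∀ a : ℝ, 0 ≤ a → a ≤ 1 → y^a ≤ 2*Y^a := by
    intro y hy1 hy2 a ha0 ha1
    have hya : y^a ≤ (2*Y)^a := Real.rpow_le_rpow (by linarith) hy2 ha0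
    have h2a : (2:ℝ)^a ≤ 2 := by
      calc (2:ℝ)^a ≤ (2:ℝ)^(1:ℝ) := Real.rpow_le_rpow_of_exponent_le one_le_two ha1
      _ = 2 := Real.rpow_one 2
    calc y^a ≤ (2*Y)^a := hya
    _ = 2^a * Y^a := Real.mul_rpow (by norm_num) (le_of_lt hY0)
    _ ≤ 2 * Y^a := mul_le_mul_of_nonneg_right h2a (le_of_lt (Real.rpow_pos_of_pos hY0 _))
  -- the grid
  set J : ℕ := ⌊Y^(2*θ + ε)/(6*c)⌋₊ with hJ_def
  have hJle : (J:ℝ) ≤ Y^(2*θ+ε)/(6*c) := Nat.floor_le (by positivity)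
  set yj : ℕ → ℝ := fun j => Y + j*(3*H) with hyj_def
  have hyjY : ∀ j : ℕ, j < J → Y ≤ yj j ∧ yj j ≤ 2*Y := by
    intro j hj
    constructor
    · have hj0 : (0:ℝ) ≤ (j:ℝ) := Nat.cast_nonneg j
      have hm := mul_nonneg hj0 (by positivity : (0:ℝ) ≤ 3*H)
      simp only [hyj_def]
      linarith only [hm]
    · have hjJ : (j:ℝ) + 1 ≤ J := by exact_mod_cast Nat.succ_le_of_lt hj
      have hJ3H : (J:ℝ)*(3*H) ≤ Y := by
        have h' : (J:ℝ)*(3*H) ≤ (Y^(2*θ+ε)/(6*c))*(3*(2*c*Y^e)) :=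
          mul_le_mul hJle (by rw [hH_def]) (by positivity) (by positivity)
        calc (J:ℝ)*(3*H) ≤ (Y^(2*θ+ε)/(6*c))*(3*(2*c*Y^e)) := h'
        _ = Y^(2*θ+ε) * Y^e := by field_simp; ring
        _ = Y := by
            rw [← Real.rpow_add hY0]
            have : 2*θ + ε + e = 1 := by simp only [he_def]; ring
            rw [this, Real.rpow_one]
      have hmono : (j:ℝ)*(3*H) ≤ ((J:ℝ)-1)*(3*H) :=
        mul_le_mul_of_nonneg_right (by linarith only [hjJ]) (by positivity)
      simp only [hyj_def]
      linarith only [hmono, hJ3H, hH0]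
  -- floor/ceil range data
  set T : ℕ := ⌊2*E⌋₊ with hT_def
  set slo : ℕ → ℕ := fun t => ⌈(sY - E)/t⌉₊ with hslo_def
  set shi : ℕ → ℕ := fun t => ⌊((2:ℝ)^((1:ℝ)/2)*sY + E)/t⌋₊ with hshi_def
  set dhi : ℕ → ℕ := fun t => ⌊2*E/t⌋₊ with hdhi_def
  set khi : ℕ → ℕ := fun t => ⌊4*E*t/sY⌋₊ with hkhi_def
  set Q : Finset ((_ : ℕ) × (ℕ × ℕ × ℕ)) :=
    (Finset.Icc 1 T).sigma
      (fun t => Finset.Icc (slo t) (shi t) ×ˢ (Finset.Icc 1 (dhi t) ×ˢ Finset.Icc 1 (khi t)))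
    with hQ_def
  -- the key extraction
  have key : ∀ j : ℕ, ∃ q : ((_ : ℕ) × (ℕ × ℕ × ℕ)), j < J →
      q ∈ Q ∧ yj j - c * (yj j)^e ≤ (recon q : ℝ) ∧ (recon q : ℝ) ≤ yj j + c * (yj j)^e := by
    intro j
    by_cases hj : j < J
    swap
    · exact ⟨⟨0, 0, 0, 0⟩, fun h => absurd h hj⟩
    obtain ⟨hyl, hyu⟩ := hyjY j hj
    have hyj0 : (0:ℝ) < yj j := by linarith
    have hyj1 : (1:ℝ) ≤ yj j := by linarith
    obtain ⟨n, a₁, a₂, b₁, b₂, ha1pos, h12, h23, h34, hn1, hn2, hnlo, hnhi,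
      hA1l, hA1u, hA2l, hA2u, hB2l, hB2u, hB1l, hB1u⟩ := hcon (yj j) (by linarith) hyj1
    have hb2pos : 0 < b₂ := lt_of_lt_of_le (lt_of_le_of_lt (Nat.zero_le _) h12) h23
    obtain ⟨s, t, u, v, hs0, ht0, hv0, htu, hes, heu, hev, het⟩ :=
      four_number ha1pos h12 hb2pos (by rw [← hn1, ← hn2])
    set k := u - t with hk_def
    have huk : u = t + k := by omega
    have hk1 : 1 ≤ k := by omega
    have hsv : s < v := by
      have hq1 : s*u ≤ t*v := by rw [← heu, ← het]; exact h23
      have hq2 : s*t < s*u := Nat.mul_lt_mul_of_le_of_lt (le_refl s) htu hs0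
      have hq3 : t*s < t*v := by
        rw [Nat.mul_comm t s]; exact lt_of_lt_of_le hq2 hq1
      exact Nat.lt_of_mul_lt_mul_left hq3
    set d := v - s with hd_def
    have hvd : v = s + d := by omega
    have hd1 : 1 ≤ d := by omega
    -- cast equalities
    have ca1 : (a₁:ℝ) = (s:ℝ)*(t:ℝ) := by exact_mod_cast hes
    have ca2 : (a₂:ℝ) = (s:ℝ)*((t:ℝ)+(k:ℝ)) := by
      rw [heu, huk]; push_cast; ring
    have cb2 : (b₂:ℝ) = (t:ℝ)*((s:ℝ)+(d:ℝ)) := by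
      rw [het, hvd]; push_cast; ring
    -- real interval facts
    have hsqY : sY ≤ (yj j)^((1:ℝ)/2) := Real.rpow_le_rpow (le_of_lt hY0) hyl (by norm_num)
    have hsqY2 : (yj j)^((1:ℝ)/2) ≤ (2:ℝ)^((1:ℝ)/2)*sY := by
      have h' := Real.rpow_le_rpow (by linarith) hyu (show (0:ℝ) ≤ 1/2 by norm_num)
      rwa [Real.mul_rpow (by norm_num) (le_of_lt hY0)] at h'
    have hθE : c'*(yj j)^θ ≤ E := by
      have h' := hpow (yj j) hyl hyu θ (le_of_lt hθ0) (by linarith)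
      calc c'*(yj j)^θ ≤ c'*(2*Y^θ) := mul_le_mul_of_nonneg_left h' (le_of_lt hc')
      _ = E := by rw [hE_def]; ring
    -- key real inequalities
    have hstlo : sY - E ≤ (s:ℝ)*(t:ℝ) := by
      rw [← ca1]; linarith only [hA1l, hsqY, hθE]
    have hsthi : (s:ℝ)*(t:ℝ) ≤ (2:ℝ)^((1:ℝ)/2)*sY + E := by
      rw [← ca1]; linarith only [hA1u, hsqY2, hθE]
    have hsk : (s:ℝ)*(k:ℝ) ≤ 2*E := by
      have h' : (a₂:ℝ) - (a₁:ℝ) ≤ 2*E := by linarith only [hA2u, hA1l, hθE]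
      calc (s:ℝ)*(k:ℝ) = (a₂:ℝ) - (a₁:ℝ) := by rw [ca1, ca2]; ring
      _ ≤ 2*E := h'
    have htd : (t:ℝ)*(d:ℝ) ≤ 2*E := by
      have h' : (b₂:ℝ) - (a₁:ℝ) ≤ 2*E := by linarith only [hB2u, hA1l, hθE]
      calc (t:ℝ)*(d:ℝ) = (b₂:ℝ) - (a₁:ℝ) := by rw [ca1, cb2]; ring
      _ ≤ 2*E := h'
    have ht1R : (1:ℝ) ≤ (t:ℝ) := by exact_mod_cast ht0
    have ht0R : (0:ℝ) < (t:ℝ) := by linarith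
    have hd1R : (1:ℝ) ≤ (d:ℝ) := by exact_mod_cast hd1
    have h2t : (t:ℝ) ≤ 2*E := by
      have h' : (t:ℝ)*1 ≤ (t:ℝ)*(d:ℝ) := mul_le_mul_of_nonneg_left hd1R (by linarith)
      linarith only [h', htd]
    -- memberships
    have m1 : t ∈ Finset.Icc 1 T := by
      rw [Finset.mem_Icc, hT_def]
      exact ⟨ht0, Nat.le_floor h2t⟩
    have m2 : s ∈ Finset.Icc (slo t) (shi t) := by
      rw [Finset.mem_Icc]
      constructor
      · simp only [hslo_def]
        exact Nat.ceil_le.mpr (by rw [div_le_iff₀ ht0R]; exact hstlo)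
      · simp only [hshi_def]
        exact Nat.le_floor (by rw [le_div_iff₀ ht0R]; exact hsthi)
    have m3 : d ∈ Finset.Icc 1 (dhi t) := by
      rw [Finset.mem_Icc]
      refine ⟨hd1, ?_⟩
      simp only [hdhi_def]
      apply Nat.le_floor
      rw [le_div_iff₀ ht0R]
      linarith only [htd]
    have m4 : k ∈ Finset.Icc 1 (khi t) := by
      rw [Finset.mem_Icc]
      refine ⟨hk1, ?_⟩
      simp only [hkhi_def]
      apply Nat.le_floor
      rw [le_div_iff₀ hsY0]
      have hApr : sY ≤ 2*((s:ℝ)*(t:ℝ)) := by linarith only [h2E, hstlo]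
      have hB' : (k:ℝ)*sY ≤ (k:ℝ)*(2*((s:ℝ)*(t:ℝ))) :=
        mul_le_mul_of_nonneg_left hApr (Nat.cast_nonneg k)
      have hC' : ((s:ℝ)*(k:ℝ))*(2*(t:ℝ)) ≤ (2*E)*(2*(t:ℝ)) :=
        mul_le_mul_of_nonneg_right hsk (by linarith)
      linarith only [hB', hC']
    have hmem : (⟨t, (s, d, k)⟩ : ((_ : ℕ) × (ℕ × ℕ × ℕ))) ∈ Q := by
      rw [hQ_def]
      rw [Finset.mem_sigma]
      exact ⟨m1, Finset.mem_product.mpr ⟨m2, Finset.mem_product.mpr ⟨m3, m4⟩⟩⟩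
    have hrec : recon (⟨t, (s, d, k)⟩ : ((_ : ℕ) × (ℕ × ℕ × ℕ))) = n := by
      simp only [recon]
      rw [hn1, hes, hev, hvd, huk]
      ring
    refine ⟨⟨t, (s, d, k)⟩, fun _ => ⟨hmem, ?_, ?_⟩⟩
    · rw [hrec, he_def]; exact hnlo
    · rw [hrec, he_def]; exact hnhi
  choose F hF using key
  -- injectivity
  have hcyH : ∀ i : ℕ, i < J → c * (yj i)^e ≤ H := by
    intro i hi
    obtain ⟨hyl, hyu⟩ := hyjY i hi
    have h' := hpow (yj i) hyl hyu e (le_of_lt he0) he1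
    calc c * (yj i)^e ≤ c * (2*Y^e) := mul_le_mul_of_nonneg_left h' (le_of_lt hc)
    _ = H := by rw [hH_def]; ring
  have hinj : Set.InjOn F ↑(Finset.range J) := by
    intro i hi j hj hFij
    simp only [Finset.coe_range, Set.mem_Iio] at hi hj
    by_contra hne
    obtain ⟨_, hi1, hi2⟩ := hF i hi
    obtain ⟨_, hj1, hj2⟩ := hF j hj
    rw [hFij] at hi1 hi2
    have hci := hcyH i hi
    have hcj := hcyH j hj
    rcases lt_or_gt_of_ne hne with h | h
    · have hij : (i:ℝ) + 1 ≤ (j:ℝ) := by exact_mod_cast Nat.succ_le_of_lt h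
      have hgap : yj j - yj i = ((j:ℝ) - (i:ℝ))*(3*H) := by simp only [hyj_def]; ring
      have h3H : 3*H ≤ yj j - yj i := by
        rw [hgap]
        have hm := mul_le_mul_of_nonneg_right
          (show (1:ℝ) ≤ (j:ℝ) - (i:ℝ) by linarith only [hij]) (by positivity : (0:ℝ) ≤ 3*H)
        linarith only [hm]
      linarith only [hi1, hi2, hj1, hj2, hci, hcj, h3H, hH0]
    · have hij : (j:ℝ) + 1 ≤ (i:ℝ) := by exact_mod_cast Nat.succ_le_of_lt h
      have hgap : yj i - yj j = ((i:ℝ) - (j:ℝ))*(3*H) := by simp only [hyj_def]; ring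
      have h3H : 3*H ≤ yj i - yj j := by
        rw [hgap]
        have hm := mul_le_mul_of_nonneg_right
          (show (1:ℝ) ≤ (i:ℝ) - (j:ℝ) by linarith only [hij]) (by positivity : (0:ℝ) ≤ 3*H)
        linarith only [hm]
      linarith only [hi1, hi2, hj1, hj2, hci, hcj, h3H, hH0]
  have hmaps : ∀ i ∈ Finset.range J, F i ∈ Q := by
    intro i hi
    exact (hF i (Finset.mem_range.mp hi)).1
  have hcard : (J:ℝ) ≤ (Q.card : ℝ) := by
    have := Finset.card_le_card_of_injOn F hmaps hinj
    rw [Finset.card_range] at this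
    exact_mod_cast this
  -- cardinality bound
  have hQbound : (Q.card : ℝ) ≤ 24*E^2*(1 + Real.log (2*E)) := by
    have hsqrt2 : (2:ℝ)^((1:ℝ)/2) ≤ 3/2 := by
      have hsq : ((2:ℝ)^((1:ℝ)/2))^(2:ℕ) = 2 := by
        rw [← Real.rpow_natCast ((2:ℝ)^((1:ℝ)/2)) 2, ← Real.rpow_mul (by norm_num)]
        norm_num
      linarith only [hsq, mul_self_nonneg ((2:ℝ)^((1:ℝ)/2) - 3/2)]
    have hTle : (T:ℝ) ≤ 2*E := by rw [hT_def]; exact Nat.floor_le (by positivity)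
    have hterm : ∀ t ∈ Finset.Icc 1 T,
        (((Finset.Icc (slo t) (shi t)).card : ℝ) *
          (((Finset.Icc 1 (dhi t)).card : ℝ) * ((Finset.Icc 1 (khi t)).card : ℝ)))
        ≤ 24*E^2*((t:ℝ))⁻¹ := by
      intro t ht
      obtain ⟨ht1, htT⟩ := Finset.mem_Icc.mp ht
      have ht1R : (1:ℝ) ≤ (t:ℝ) := by exact_mod_cast ht1
      have ht0R : (0:ℝ) < (t:ℝ) := by linarith
      have htR : (t:ℝ) ≤ 2*E := le_trans (by exact_mod_cast htT) hTle
      have htsY : (t:ℝ) ≤ sY := le_trans htR h2E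
      -- bound on the s-range
      have hshile : ((shi t : ℕ):ℝ) ≤ ((2:ℝ)^((1:ℝ)/2)*sY + E)/t := by
        simp only [hshi_def]
        exact Nat.floor_le (by positivity)
      have hslole : (sY - E)/(t:ℝ) ≤ ((slo t : ℕ):ℝ) := by
        simp only [hslo_def]
        exact Nat.le_ceil _
      have hS : (((Finset.Icc (slo t) (shi t)).card : ℕ) : ℝ) ≤ 3*sY/t := by
        apply cardIcc_le _ (by positivity)
        have hnum : ((2:ℝ)^((1:ℝ)/2)*sY + E) - (sY - E) + t ≤ 3*sY := by
          have hp := mul_le_mul_of_nonneg_right hsqrt2 (le_of_lt hsY0)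
          linarith only [hp, h2E, htsY, hsY0]
        have hdivle : (((2:ℝ)^((1:ℝ)/2)*sY + E) - (sY - E) + t)/t ≤ 3*sY/t :=
          div_le_div_of_nonneg_right hnum ht0R.le
        have heq : ((2:ℝ)^((1:ℝ)/2)*sY + E)/t - (sY - E)/t + 1
            = (((2:ℝ)^((1:ℝ)/2)*sY + E) - (sY - E) + t)/t := by
          field_simp
        linarith only [hshile, hslole, heq.le, heq.ge, hdivle]
      have hDc : (((Finset.Icc 1 (dhi t)).card : ℕ) : ℝ) ≤ 2*E/t := by
        rw [Nat.card_Icc]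
        simp only [hdhi_def, Nat.add_sub_cancel]
        exact Nat.floor_le (by positivity)
      have hKc : (((Finset.Icc 1 (khi t)).card : ℕ) : ℝ) ≤ 4*E*t/sY := by
        rw [Nat.card_Icc]
        simp only [hkhi_def, Nat.add_sub_cancel]
        exact Nat.floor_le (by positivity)
      have hDK : (((Finset.Icc 1 (dhi t)).card : ℕ) : ℝ) * ((Finset.Icc 1 (khi t)).card : ℕ)
          ≤ (2*E/t) * (4*E*t/sY) :=
        mul_le_mul hDc hKc (Nat.cast_nonneg _) (by positivity)
      have hSDK := mul_le_mul hS hDK (by positivity) (by positivity)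
      have heq2 : (3*sY/t)*((2*E/t)*(4*E*t/sY)) = 24*E^2*((t:ℝ))⁻¹ := by
        field_simp
        ring
      calc (((Finset.Icc (slo t) (shi t)).card : ℝ) *
          (((Finset.Icc 1 (dhi t)).card : ℝ) * ((Finset.Icc 1 (khi t)).card : ℝ)))
          ≤ (3*sY/t)*((2*E/t)*(4*E*t/sY)) := by
            calc _ ≤ (3*sY/t)*(((Finset.Icc 1 (dhi t)).card : ℝ) * ((Finset.Icc 1 (khi t)).card : ℝ)) :=
                mul_le_mul_of_nonneg_right hS (by positivity)
            _ ≤ (3*sY/t)*((2*E/t)*(4*E*t/sY)) := mul_le_mul_of_nonneg_left hDK (by positivity)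
      _ = 24*E^2*((t:ℝ))⁻¹ := heq2
    have hharm : ∑ t ∈ Finset.Icc 1 T, ((t:ℝ))⁻¹ = ((harmonic T : ℚ) : ℝ) := by
      rw [harmonic_eq_sum_Icc]
      push_cast
      rfl
    have hcast : (Q.card : ℝ) = ∑ t ∈ Finset.Icc 1 T,
        (((Finset.Icc (slo t) (shi t)).card : ℝ) *
          (((Finset.Icc 1 (dhi t)).card : ℝ) * ((Finset.Icc 1 (khi t)).card : ℝ))) := by
      rw [hQ_def, Finset.card_sigma]
      push_cast
      exact Finset.sum_congr rfl (fun t _ => by rw [Finset.card_product, Finset.card_product]; push_cast; ring)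
    calc (Q.card : ℝ) = _ := hcast
    _ ≤ ∑ t ∈ Finset.Icc 1 T, 24*E^2*((t:ℝ))⁻¹ := Finset.sum_le_sum hterm
    _ = 24*E^2 * ∑ t ∈ Finset.Icc 1 T, ((t:ℝ))⁻¹ := by rw [Finset.mul_sum]
    _ = 24*E^2 * ((harmonic T : ℚ) : ℝ) := by rw [hharm]
    _ ≤ 24*E^2*(1 + Real.log T) := by
        exact mul_le_mul_of_nonneg_left (harmonic_le_one_add_log T) (by positivity)
    _ ≤ 24*E^2*(1 + Real.log (2*E)) := by
        apply mul_le_mul_of_nonneg_left _ (by positivity)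
        rcases Nat.eq_zero_or_pos T with h | h
        · simp only [h, Nat.cast_zero, Real.log_zero]
          have : (0:ℝ) ≤ Real.log (2*E) := Real.log_nonneg (by linarith only [hE1])
          linarith only [this]
        · have hT0R : (0:ℝ) < (T:ℝ) := by exact_mod_cast h
          have := Real.log_le_log hT0R hTle
          linarith only [this]
  -- lower bound on J
  have hJlo : Y^(2*θ+ε)/(12*c) ≤ (J:ℝ) := by
    set x : ℝ := Y^(2*θ+ε)/(6*c) with hx_def
    have hx2 : 2 ≤ x := by
      rw [hx_def, le_div_iff₀ (by positivity)]; linarith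
    have := Nat.sub_one_lt_floor x
    have hxx : x/2 ≤ x - 1 := by linarith
    calc Y^(2*θ+ε)/(12*c) = x/2 := by rw [hx_def]; ring
    _ ≤ x - 1 := hxx
    _ ≤ (J:ℝ) := by rw [hJ_def]; exact le_of_lt (Nat.sub_one_lt_floor x)
  -- final contradiction
  have hfinal : Y^(2*θ+ε)/(12*c) ≤ 24*E^2*(1 + Real.log (2*E)) :=
    le_trans hJlo (le_trans hcard hQbound)
  -- rewrite E and logs
  have hYθθ : Y^θ * Y^θ = Y^(2*θ) := by rw [← Real.rpow_add hY0]; congr 1; ring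
  have hE2 : E^2 = 4*c'^2*Y^(2*θ) := by
    calc E^2 = 4*c'^2*(Y^θ*Y^θ) := by rw [hE_def]; ring
    _ = 4*c'^2*Y^(2*θ) := by rw [hYθθ]
  have hlog2E : Real.log (2*E) = Real.log (4*c') + θ * Real.log Y := by
    rw [hE_def]
    have : 2*(2*c'*Y^θ) = (4*c') * Y^θ := by ring
    rw [this, Real.log_mul (by positivity) (ne_of_gt (Real.rpow_pos_of_pos hY0 _)),
      Real.log_rpow hY0]
  have hYsplit : Y^(2*θ+ε) = Y^(2*θ) * Y^ε := by
    rw [← Real.rpow_add hY0]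
  have hY2θ : 0 < Y^(2*θ) := Real.rpow_pos_of_pos hY0 _
  have hlogY0 : 0 ≤ Real.log Y := Real.log_nonneg hY1
  have hmax : Real.log (4*c') ≤ max 0 (Real.log (4*c')) := le_max_right _ _
  have hmax0 : 0 ≤ max 0 (Real.log (4*c')) := le_max_left _ _
  have hfin2 : Y^(2*θ+ε) ≤ 12*c*(24*(4*c'^2*Y^(2*θ))*(1 + (Real.log (4*c') + θ*Real.log Y))) := by
    have h' := (div_le_iff₀ (show (0:ℝ) < 12*c by positivity)).mp hfinal
    rw [hE2, hlog2E] at h'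
    exact le_trans h' (le_of_eq (by ring))
  have hB : Y^(2*θ)*Y^ε ≤ Y^(2*θ)*(1152*c*c'^2*(1 + Real.log (4*c') + θ*Real.log Y)) := by
    rw [← hYsplit]
    exact le_trans hfin2 (le_of_eq (by ring))
  have hC : Y^ε ≤ 1152*c*c'^2*(1 + Real.log (4*c') + θ*Real.log Y) :=
    (mul_le_mul_iff_right₀ hY2θ).mp hB
  have hD : 1 + Real.log (4*c') + θ*Real.log Y
      ≤ (1 + max 0 (Real.log (4*c')))*(1 + Real.log Y) := by
    linarith only [mul_le_mul_of_nonneg_right (show θ ≤ (1:ℝ) by linarith only [hθ2]) hlogY0,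
      mul_nonneg hmax0 hlogY0, hmax]
  have step1 : Y^ε ≤ K * (1 + Real.log Y) := by
    calc Y^ε ≤ 1152*c*c'^2*(1 + Real.log (4*c') + θ*Real.log Y) := hC
    _ ≤ 1152*c*c'^2*((1 + max 0 (Real.log (4*c')))*(1 + Real.log Y)) :=
        mul_le_mul_of_nonneg_left hD (by positivity)
    _ = K * (1 + Real.log Y) := by rw [hK_def]; ring
  -- contradiction with h4
  have hz1 : (1:ℝ) ≤ Y^(ε/2) := by
    have := Real.rpow_le_rpow (by norm_num) hY1 (show (0:ℝ) ≤ ε/2 by linarith)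
    rwa [Real.one_rpow] at this
  have hzz : Y^(ε/2)*Y^(ε/2) = Y^ε := by rw [← Real.rpow_add hY0]; congr 1; ring
  have hlogle : Real.log Y ≤ (2/ε)*Y^(ε/2) := by
    have h := Real.log_le_rpow_div (le_of_lt hY0) (show (0:ℝ) < ε/2 by linarith)
    have : Y^(ε/2)/(ε/2) = (2/ε)*Y^(ε/2) := by field_simp
    linarith [h, this.le, this.ge]
  have p1 : (K*(1+2/ε)+1)*Y^(ε/2) ≤ Y^(ε/2)*Y^(ε/2) :=
    mul_le_mul_of_nonneg_right h4 (le_trans zero_le_one hz1)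
  have p2 : K*Real.log Y ≤ K*((2/ε)*Y^(ε/2)) :=
    mul_le_mul_of_nonneg_left hlogle (le_of_lt hK1)
  have p3 : K*1 ≤ K*Y^(ε/2) := mul_le_mul_of_nonneg_left hz1 (le_of_lt hK1)
  linarith only [step1, hzz, p1, p2, p3, hz1, hK1]

/-- For `1/4 ≤ θ < 1/2`: for any `ε > 0` and constants `c, c' > 0` there exist
arbitrarily large `y` such that `[y - c y^(1-2θ-ε), y + c y^(1-2θ-ε)]` contains no
integer `n = a₁b₁ = a₂b₂` with `a₁ < a₂ ≤ b₂ < b₁` integers in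
`[y^(1/2) - c' y^θ, y^(1/2) + c' y^θ]`. -/
theorem stmt5 (θ ε c c' : ℝ) (hθ1 : 1/4 ≤ θ) (hθ2 : θ < 1/2) (hε : 0 < ε)
    (hc : 0 < c) (hc' : 0 < c') :
    ∀ y₀ : ℝ, ∃ y : ℝ, y₀ ≤ y ∧
      ¬ ∃ n a₁ a₂ b₁ b₂ : ℕ, 0 < a₁ ∧ a₁ < a₂ ∧ a₂ ≤ b₂ ∧ b₂ < b₁ ∧
        n = a₁ * b₁ ∧ n = a₂ * b₂ ∧
        y - c * y ^ (1 - 2*θ - ε) ≤ (n : ℝ) ∧ (n : ℝ) ≤ y + c * y ^ (1 - 2*θ - ε) ∧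
        y ^ ((1:ℝ)/2) - c' * y ^ θ ≤ (a₁ : ℝ) ∧ (a₁ : ℝ) ≤ y ^ ((1:ℝ)/2) + c' * y ^ θ ∧
        y ^ ((1:ℝ)/2) - c' * y ^ θ ≤ (a₂ : ℝ) ∧ (a₂ : ℝ) ≤ y ^ ((1:ℝ)/2) + c' * y ^ θ ∧
        y ^ ((1:ℝ)/2) - c' * y ^ θ ≤ (b₂ : ℝ) ∧ (b₂ : ℝ) ≤ y ^ ((1:ℝ)/2) + c' * y ^ θ ∧
        y ^ ((1:ℝ)/2) - c' * y ^ θ ≤ (b₁ : ℝ) ∧ (b₁ : ℝ) ≤ y ^ ((1:ℝ)/2) + c' * y ^ θ := by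
  intro y₀
  have hε₁0 : 0 < min ε (1/2 - θ) := lt_min hε (by linarith)
  obtain ⟨y, hy₀, hy1, hbad⟩ :=
    main θ (min ε (1/2 - θ)) c c' hθ1 hθ2 hε₁0 (min_le_right _ _) hc hc' y₀
  refine ⟨y, hy₀, ?_⟩
  intro hcfg
  apply hbad
  obtain ⟨n, a₁, a₂, b₁, b₂, p1, p2, p3, p4, p5, p6, p7, p8, prest⟩ := hcfg
  have hmono : y ^ (1 - 2*θ - ε) ≤ y ^ (1 - 2*θ - min ε (1/2 - θ)) :=
    Real.rpow_le_rpow_of_exponent_le hy1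
      (by have := min_le_left ε (1/2 - θ); linarith)
  have hcc := mul_le_mul_of_nonneg_left hmono (le_of_lt hc)
  exact ⟨n, a₁, a₂, b₁, b₂, p1, p2, p3, p4, p5, p6,
    by linarith only [p7, hcc], by linarith only [p8, hcc], prest⟩
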